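/- Let L > 0 and θ : [0,L] → [0,π] be Lipschitz with θ(0) = 0, θ(L) = π, ∫₀ᴸ cos θ(t) dt = 0, and ∫₀ˢ cos θ(t) dt > 0 for all s ∈ (0,L). Let θ* be the non-decreasing rearrangement of θ. Then θ* also satisfies: θ*(0) = 0, θ*(L) = π, ∫₀ᴸ cos θ*(t) dt = 0, ∫₀ᴸ sin θ*(t) dt > 0, and ∫₀ˢ cos θ*(t) dt > 0 for all s ∈ (0,L). -/

import Mathlib

open Real Set intervalIntegral MeasureTheory

/-- The non-decreasing rearrangement of a function `u` on the interval `[0, L]`. -/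
noncomputable def ndRearr (L : ℝ) (u : ℝ → ℝ) (s : ℝ) : ℝ :=
  sInf {c : ℝ | 0 ≤ c ∧
    (MeasureTheory.volume {t : ℝ | t ∈ Set.Icc 0 L ∧ c ≤ u t}).toReal ≤ L - s}

namespace NDAux

variable (L : ℝ) (θ : ℝ → ℝ)

/-- the level superset -/
def lev (c : ℝ) : Set ℝ := {t : ℝ | t ∈ Set.Icc 0 L ∧ c ≤ θ t}

/-- measure of level set -/
noncomputable def mval (c : ℝ) : ℝ := (MeasureTheory.volume (lev L θ c)).toReal

/-- the defining set -/
def Sset (s : ℝ) : Set ℝ := {c : ℝ | 0 ≤ c ∧ mval L θ c ≤ L - s}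

lemma ndRearr_eq (s : ℝ) : ndRearr L θ s = sInf (Sset L θ s) := rfl

lemma lev_eq (c : ℝ) : lev L θ c = Set.Icc 0 L ∩ θ ⁻¹' (Set.Ici c) := by
  ext t
  simp only [lev, Set.mem_setOf_eq, Set.mem_inter_iff, Set.mem_preimage, Set.mem_Ici]

variable {L θ}

lemma isClosed_lev (hc : ContinuousOn θ (Set.Icc 0 L)) (c : ℝ) : IsClosed (lev L θ c) := by
  rw [lev_eq]
  exact hc.preimage_isClosed_of_isClosed isClosed_Icc isClosed_Ici

lemma vol_lev_le (c : ℝ) (hL : 0 ≤ L) : MeasureTheory.volume (lev L θ c) ≤ ENNReal.ofReal L := by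
  calc MeasureTheory.volume (lev L θ c) ≤ MeasureTheory.volume (Set.Icc 0 L) :=
        measure_mono (fun t ht => ht.1)
    _ = ENNReal.ofReal L := by rw [Real.volume_Icc, sub_zero]

lemma vol_lev_ne_top (c : ℝ) (hL : 0 ≤ L) : MeasureTheory.volume (lev L θ c) ≠ ⊤ :=
  ne_top_of_le_ne_top ENNReal.ofReal_ne_top (vol_lev_le c hL)

lemma mval_nonneg (c : ℝ) : 0 ≤ mval L θ c := ENNReal.toReal_nonneg

lemma mval_le (c : ℝ) (hL : 0 ≤ L) : mval L θ c ≤ L := by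
  have := vol_lev_le (θ := θ) c hL
  have h2 := ENNReal.toReal_mono ENNReal.ofReal_ne_top this
  rwa [ENNReal.toReal_ofReal hL] at h2

lemma mval_anti (hL : 0 ≤ L) : Antitone (mval L θ) := by
  intro c₁ c₂ h
  apply ENNReal.toReal_mono (vol_lev_ne_top c₁ hL)
  exact measure_mono (fun t ht => ⟨ht.1, le_trans h ht.2⟩)

lemma Sset_up (hL : 0 ≤ L) {s c₁ c₂ : ℝ} (h : c₁ ∈ Sset L θ s) (hle : c₁ ≤ c₂) :
    c₂ ∈ Sset L θ s := ⟨le_trans h.1 hle, le_trans (mval_anti hL hle) h.2⟩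

lemma Sset_bddBelow (s : ℝ) : BddBelow (Sset L θ s) := ⟨0, fun c hc => hc.1⟩

lemma lev_empty_of_gt (hrange : ∀ t ∈ Set.Icc 0 L, θ t ∈ Set.Icc (0:ℝ) Real.pi)
    {c : ℝ} (hc : Real.pi < c) : lev L θ c = ∅ := by
  ext t
  simp only [lev, Set.mem_setOf_eq, Set.mem_empty_iff_false, iff_false]
  rintro ⟨ht, hct⟩
  have := (hrange t ht).2
  linarith

lemma Sset_nonempty (hrange : ∀ t ∈ Set.Icc 0 L, θ t ∈ Set.Icc (0:ℝ) Real.pi)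
    {s : ℝ} (hs : s ≤ L) : (Sset L θ s).Nonempty := by
  refine ⟨Real.pi + 1, by positivity, ?_⟩
  rw [mval, lev_empty_of_gt hrange (by linarith), measure_empty]
  simpa using by linarith

lemma ndRearr_nonneg (s : ℝ) : 0 ≤ ndRearr L θ s :=
  Real.sInf_nonneg (fun c hc => hc.1)

lemma ndRearr_le_pi (hrange : ∀ t ∈ Set.Icc 0 L, θ t ∈ Set.Icc (0:ℝ) Real.pi)
    {s : ℝ} (hs0 : 0 ≤ s) (hs : s ≤ L) : ndRearr L θ s ≤ Real.pi := by
  have h : ∀ ε > 0, ndRearr L θ s ≤ Real.pi + ε := by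
    intro ε hε
    apply csInf_le (Sset_bddBelow s)
    refine ⟨by positivity, ?_⟩
    rw [mval, lev_empty_of_gt hrange (by linarith), measure_empty]
    simpa using by linarith
  by_contra hcon
  push_neg at hcon
  have := h ((ndRearr L θ s - Real.pi)/2) (by linarith)
  linarith

lemma ndRearr_monotoneOn (hrange : ∀ t ∈ Set.Icc 0 L, θ t ∈ Set.Icc (0:ℝ) Real.pi) :
    MonotoneOn (ndRearr L θ) (Set.Icc 0 L) := by
  intro s₁ hs₁ s₂ hs₂ h
  apply csInf_le_csInf (Sset_bddBelow s₁) (Sset_nonempty hrange hs₂.2)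
  intro c hc
  exact ⟨hc.1, le_trans hc.2 (by linarith)⟩

end NDAux

namespace NDAux

variable {L : ℝ} {θ : ℝ → ℝ} {K : NNReal}

lemma ndRearr_zero (hL : 0 < L) : ndRearr L θ 0 = 0 := by
  have h0 : (0:ℝ) ∈ Sset L θ 0 := by
    refine ⟨le_refl 0, ?_⟩
    rw [sub_zero]
    exact mval_le 0 hL.le
  have h1 : ndRearr L θ 0 ≤ 0 := csInf_le (Sset_bddBelow 0) h0
  exact le_antisymm h1 (ndRearr_nonneg 0)

/-- strict level sets near the top have positive measure -/
lemma vol_gt_pos (hθ : LipschitzOnWith K θ (Set.Icc 0 L)) (hLval : θ L = Real.pi)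
    (hL : 0 < L) {c : ℝ} (hc : c < Real.pi) :
    0 < MeasureTheory.volume {t : ℝ | t ∈ Set.Icc 0 L ∧ c < θ t} := by
  set δ : ℝ := min L ((Real.pi - c)/(2*(K+1))) with hδdef
  have hK1 : (0:ℝ) < (K:ℝ) + 1 := by positivity
  have hπc : (0:ℝ) < Real.pi - c := by linarith
  have hδpos : 0 < δ := lt_min hL (div_pos hπc (by positivity))
  have hδL : δ ≤ L := min_le_left _ _
  have hsub : Set.Icc (L - δ) L ⊆ {t : ℝ | t ∈ Set.Icc 0 L ∧ c < θ t} := by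
    intro t ht
    have ht1 : L - δ ≤ t := ht.1
    have ht2 : t ≤ L := ht.2
    have htIcc : t ∈ Set.Icc 0 L := ⟨by linarith, ht2⟩
    have hdist := hθ.dist_le_mul t htIcc L (Set.right_mem_Icc.mpr hL.le)
    rw [Real.dist_eq, Real.dist_eq] at hdist
    have habs : |t - L| = L - t := by rw [abs_sub_comm]; exact abs_of_nonneg (by linarith)
    rw [habs, hLval] at hdist
    have h1 : Real.pi - θ t ≤ (K:ℝ) * (L - t) := by
      have := (abs_le.mp hdist).1
      linarith
    have h2 : (K:ℝ) * (L - t) ≤ (K:ℝ) * δ := by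
      apply mul_le_mul_of_nonneg_left (by linarith) (NNReal.coe_nonneg K)
    have h3 : (K:ℝ) * δ ≤ (K:ℝ) * ((Real.pi - c)/(2*(K+1))) :=
      mul_le_mul_of_nonneg_left (min_le_right _ _) (NNReal.coe_nonneg K)
    have h4 : (K:ℝ) * ((Real.pi - c)/(2*(K+1))) < Real.pi - c := by
      rw [mul_div_assoc', div_lt_iff₀ (by positivity)]
      nlinarith [NNReal.coe_nonneg K, mul_pos hπc (show (0:ℝ) < (K:ℝ)+2 by positivity)]
    refine ⟨htIcc, by linarith⟩
  calc (0:ENNReal) < ENNReal.ofReal δ := by simpa using hδpos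
    _ = MeasureTheory.volume (Set.Icc (L - δ) L) := by rw [Real.volume_Icc]; ring_nf
    _ ≤ _ := measure_mono hsub

lemma mval_pos (hθ : LipschitzOnWith K θ (Set.Icc 0 L)) (hLval : θ L = Real.pi)
    (hL : 0 < L) {c : ℝ} (hc : c < Real.pi) : 0 < mval L θ c := by
  have h1 : 0 < MeasureTheory.volume (lev L θ c) :=
    lt_of_lt_of_le (vol_gt_pos hθ hLval hL hc) (measure_mono (fun t ht => ⟨ht.1, ht.2.le⟩))
  exact ENNReal.toReal_pos h1.ne' (vol_lev_ne_top c hL.le)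

lemma ndRearr_L (hθ : LipschitzOnWith K θ (Set.Icc 0 L)) (hLval : θ L = Real.pi)
    (hrange : ∀ t ∈ Set.Icc 0 L, θ t ∈ Set.Icc (0:ℝ) Real.pi)
    (hL : 0 < L) : ndRearr L θ L = Real.pi := by
  refine le_antisymm (ndRearr_le_pi hrange hL.le le_rfl) ?_
  apply le_csInf (Sset_nonempty hrange le_rfl)
  intro c hc
  by_contra hcon
  push_neg at hcon
  have := mval_pos hθ hLval hL hcon
  have := hc.2
  simp only [sub_self] at this
  linarith

end NDAux

namespace NDAux

variable {L : ℝ} {θ : ℝ → ℝ} {K : NNReal}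

/-- strict level superset -/
def levGT (L : ℝ) (θ : ℝ → ℝ) (c : ℝ) : Set ℝ := {t : ℝ | t ∈ Set.Icc 0 L ∧ c < θ t}

noncomputable def nval (L : ℝ) (θ : ℝ → ℝ) (c : ℝ) : ℝ :=
  (MeasureTheory.volume (levGT L θ c)).toReal

lemma levGT_eq (c : ℝ) : levGT L θ c = Set.Icc 0 L \ (Set.Icc 0 L ∩ θ ⁻¹' (Set.Iic c)) := by
  ext t
  simp only [levGT, Set.mem_setOf_eq, Set.mem_diff, Set.mem_inter_iff, Set.mem_preimage,
    Set.mem_Iic, not_and, not_le]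
  constructor
  · rintro ⟨h1, h2⟩; exact ⟨h1, fun _ => h2⟩
  · rintro ⟨h1, h2⟩; exact ⟨h1, h2 h1⟩

lemma measurableSet_levGT (hc : ContinuousOn θ (Set.Icc 0 L)) (c : ℝ) :
    MeasurableSet (levGT L θ c) := by
  rw [levGT_eq]
  exact measurableSet_Icc.diff
    (hc.preimage_isClosed_of_isClosed isClosed_Icc isClosed_Iic).measurableSet

lemma vol_levGT_le (c : ℝ) (hL : 0 ≤ L) :
    MeasureTheory.volume (levGT L θ c) ≤ ENNReal.ofReal L := by
  calc MeasureTheory.volume (levGT L θ c) ≤ MeasureTheory.volume (Set.Icc 0 L) :=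
        measure_mono (fun t ht => ht.1)
    _ = ENNReal.ofReal L := by rw [Real.volume_Icc, sub_zero]

lemma vol_levGT_ne_top (c : ℝ) (hL : 0 ≤ L) : MeasureTheory.volume (levGT L θ c) ≠ ⊤ :=
  ne_top_of_le_ne_top ENNReal.ofReal_ne_top (vol_levGT_le c hL)

lemma nval_nonneg (c : ℝ) : 0 ≤ nval L θ c := ENNReal.toReal_nonneg

lemma nval_le (c : ℝ) (hL : 0 ≤ L) : nval L θ c ≤ L := by
  have := vol_levGT_le (θ := θ) c hL
  have h2 := ENNReal.toReal_mono ENNReal.ofReal_ne_top this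
  rwa [ENNReal.toReal_ofReal hL] at h2

lemma mval_le_nval {c c' : ℝ} (hcc : c < c') (hL : 0 ≤ L) : mval L θ c' ≤ nval L θ c := by
  apply ENNReal.toReal_mono (vol_levGT_ne_top c hL)
  exact measure_mono (fun t ht => ⟨ht.1, lt_of_lt_of_le hcc ht.2⟩)

lemma vol_levGT_eq_iSup (c : ℝ) :
    MeasureTheory.volume (levGT L θ c) = ⨆ n : ℕ, MeasureTheory.volume (lev L θ (c + 1/(n+1))) := by
  have hmono : Monotone (fun n : ℕ => lev L θ (c + 1/(n+1))) := by
    intro n m hnm t ht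
    refine ⟨ht.1, le_trans ?_ ht.2⟩
    have h1 : (1:ℝ)/(m+1) ≤ 1/(n+1) := by
      apply one_div_le_one_div_of_le (by positivity)
      exact_mod_cast by omega
    linarith
  have hunion : levGT L θ c = ⋃ n : ℕ, lev L θ (c + 1/(n+1)) := by
    ext t
    simp only [levGT, lev, Set.mem_setOf_eq, Set.mem_iUnion]
    constructor
    · rintro ⟨h1, h2⟩
      obtain ⟨n, hn⟩ := exists_nat_one_div_lt (show (0:ℝ) < θ t - c by linarith)
      exact ⟨n, h1, by push_cast at hn ⊢; linarith⟩
    · rintro ⟨n, h1, h2⟩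
      have : (0:ℝ) < 1/(n+1) := by positivity
      exact ⟨h1, by linarith⟩
  rw [hunion]
  exact (hmono.directed_le).measure_iUnion

lemma lt_ndRearr_iff (hrange : ∀ t ∈ Set.Icc 0 L, θ t ∈ Set.Icc (0:ℝ) Real.pi)
    (hL : 0 < L) {s c : ℝ} (hs : s ∈ Set.Icc 0 L) (hc : 0 ≤ c) :
    c < ndRearr L θ s ↔ ∃ c' > c, L - s < mval L θ c' := by
  constructor
  · intro h
    refine ⟨(c + ndRearr L θ s)/2, by linarith, ?_⟩
    by_contra hcon
    push_neg at hcon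
    have hmem : (c + ndRearr L θ s)/2 ∈ Sset L θ s := by
      refine ⟨by linarith, hcon⟩
    have := csInf_le (Sset_bddBelow s) hmem
    rw [← ndRearr_eq] at this
    linarith
  · rintro ⟨c', hc', hm⟩
    have hsub : ∀ b ∈ Sset L θ s, c' ≤ b := by
      intro b hb
      by_contra hcon
      push_neg at hcon
      have : c' ∈ Sset L θ s := Sset_up hL.le hb hcon.le
      exact absurd this.2 (not_le.mpr hm)
    have : c' ≤ ndRearr L θ s := le_csInf (Sset_nonempty hrange hs.2) hsub
    linarith

end NDAux

namespace NDAux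

variable {L : ℝ} {θ : ℝ → ℝ} {K : NNReal}

lemma rearr_gt_eq (hrange : ∀ t ∈ Set.Icc 0 L, θ t ∈ Set.Icc (0:ℝ) Real.pi)
    (hL : 0 < L) {c : ℝ} (hc : 0 ≤ c) :
    {s : ℝ | s ∈ Set.Icc 0 L ∧ c < ndRearr L θ s} = Set.Ioc (L - nval L θ c) L := by
  ext s
  simp only [Set.mem_setOf_eq, Set.mem_Ioc]
  constructor
  · rintro ⟨hs, hlt⟩
    obtain ⟨c', hc', hm⟩ := (lt_ndRearr_iff hrange hL hs hc).mp hlt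
    have : mval L θ c' ≤ nval L θ c := mval_le_nval hc' hL.le
    exact ⟨by linarith, hs.2⟩
  · rintro ⟨h1, h2⟩
    have hnL : nval L θ c ≤ L := nval_le c hL.le
    have hs0 : 0 ≤ s := le_trans (by linarith [nval_nonneg (L := L) (θ := θ) c]) h1.le
    have hs : s ∈ Set.Icc 0 L := ⟨hs0, h2⟩
    refine ⟨hs, (lt_ndRearr_iff hrange hL hs hc).mpr ?_⟩
    have hlt : ENNReal.ofReal (L - s) < MeasureTheory.volume (levGT L θ c) := by
      rw [ENNReal.ofReal_lt_iff_lt_toReal (by linarith) (vol_levGT_ne_top c hL.le)]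
      have : (MeasureTheory.volume (levGT L θ c)).toReal = nval L θ c := rfl
      linarith [this]
    rw [vol_levGT_eq_iSup] at hlt
    rw [lt_iSup_iff] at hlt
    obtain ⟨n, hn⟩ := hlt
    have hpos : (0:ℝ) < 1/((n:ℝ)+1) := by positivity
    refine ⟨c + 1/(n+1), by linarith, ?_⟩
    exact (ENNReal.ofReal_lt_iff_lt_toReal (by linarith) (vol_lev_ne_top _ hL.le)).mp hn

/-- Equimeasurability at each level. -/
lemma equimeasurable (hrange : ∀ t ∈ Set.Icc 0 L, θ t ∈ Set.Icc (0:ℝ) Real.pi)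
    (hL : 0 < L) {c : ℝ} (hc : 0 ≤ c) :
    MeasureTheory.volume {s : ℝ | s ∈ Set.Icc 0 L ∧ c < ndRearr L θ s} =
      MeasureTheory.volume (levGT L θ c) := by
  rw [rearr_gt_eq hrange hL hc, Real.volume_Ioc]
  have h1 : L - (L - nval L θ c) = nval L θ c := by ring
  rw [h1, nval, ENNReal.ofReal_toReal (vol_levGT_ne_top c hL.le)]

end NDAux

namespace NDAux

variable {L : ℝ} {θ : ℝ → ℝ} {K : NNReal}

/-- clamp to [0, L] -/
def clamp (L : ℝ) (s : ℝ) : ℝ := max 0 (min s L)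

lemma clamp_mem (hL : 0 ≤ L) (s : ℝ) : clamp L s ∈ Set.Icc 0 L := by
  constructor
  · exact le_max_left _ _
  · apply max_le hL (min_le_right _ _)

lemma clamp_eq_self (hs : s ∈ Set.Icc 0 L) : clamp L s = s := by
  rw [clamp, min_eq_left hs.2, max_eq_right hs.1]

lemma clamp_mono : Monotone (clamp L) :=
  fun _ _ h => max_le_max le_rfl (min_le_min h le_rfl)

lemma clamp_continuous : Continuous (clamp L) :=
  continuous_const.max (continuous_id.min continuous_const)

lemma g_monotone (hrange : ∀ t ∈ Set.Icc 0 L, θ t ∈ Set.Icc (0:ℝ) Real.pi) (hL : 0 ≤ L) :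
    Monotone (fun s => ndRearr L θ (clamp L s)) := fun s₁ s₂ h =>
  ndRearr_monotoneOn hrange (clamp_mem hL s₁) (clamp_mem hL s₂) (clamp_mono h)

lemma Theta_continuous (hθ : LipschitzOnWith K θ (Set.Icc 0 L)) (hL : 0 ≤ L) :
    Continuous (fun s => θ (clamp L s)) :=
  hθ.continuousOn.comp_continuous clamp_continuous (clamp_mem hL)

/-- The pushforward measures agree. -/
lemma map_eq (hθ : LipschitzOnWith K θ (Set.Icc 0 L))
    (hrange : ∀ t ∈ Set.Icc 0 L, θ t ∈ Set.Icc (0:ℝ) Real.pi) (hL : 0 < L) :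
    MeasureTheory.Measure.map (fun s => ndRearr L θ (clamp L s))
        (MeasureTheory.volume.restrict (Set.Icc 0 L)) =
      MeasureTheory.Measure.map (fun s => θ (clamp L s))
        (MeasureTheory.volume.restrict (Set.Icc 0 L)) := by
  set g := fun s => ndRearr L θ (clamp L s) with hg
  set Θ := fun s => θ (clamp L s) with hΘ
  have hgm : Measurable g := (g_monotone hrange hL.le).measurable
  have hΘm : Measurable Θ := (Theta_continuous hθ hL.le).measurable
  have key : ∀ a : ℝ, MeasureTheory.volume (g ⁻¹' (Set.Ioi a) ∩ Set.Icc 0 L) =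
      MeasureTheory.volume (Θ ⁻¹' (Set.Ioi a) ∩ Set.Icc 0 L) := by
    intro a
    have hgset : g ⁻¹' (Set.Ioi a) ∩ Set.Icc 0 L
        = {s : ℝ | s ∈ Set.Icc 0 L ∧ a < ndRearr L θ s} := by
      ext s
      simp only [Set.mem_inter_iff, Set.mem_preimage, Set.mem_Ioi, Set.mem_setOf_eq, hg]
      constructor
      · rintro ⟨h1, h2⟩; rw [clamp_eq_self h2] at h1; exact ⟨h2, h1⟩
      · rintro ⟨h1, h2⟩; rw [clamp_eq_self h1]; exact ⟨h2, h1⟩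
    have hΘset : Θ ⁻¹' (Set.Ioi a) ∩ Set.Icc 0 L = levGT L θ a := by
      ext t
      simp only [Set.mem_inter_iff, Set.mem_preimage, Set.mem_Ioi, levGT, Set.mem_setOf_eq, hΘ]
      constructor
      · rintro ⟨h1, h2⟩; rw [clamp_eq_self h2] at h1; exact ⟨h2, h1⟩
      · rintro ⟨h1, h2⟩; rw [clamp_eq_self h1]; exact ⟨h2, h1⟩
    rw [hgset, hΘset]
    rcases le_or_gt 0 a with ha | ha
    · exact equimeasurable hrange hL ha
    · have h1 : {s : ℝ | s ∈ Set.Icc 0 L ∧ a < ndRearr L θ s} = Set.Icc 0 L := by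
        ext s
        simp only [Set.mem_setOf_eq, and_iff_left_iff_imp]
        intro hs
        exact lt_of_lt_of_le ha (ndRearr_nonneg s)
      have h2 : levGT L θ a = Set.Icc 0 L := by
        ext t
        simp only [levGT, Set.mem_setOf_eq, and_iff_left_iff_imp]
        intro ht
        exact lt_of_lt_of_le ha (hrange t ht).1
      rw [h1, h2]
  have : IsFiniteMeasure (MeasureTheory.volume.restrict (Set.Icc (0:ℝ) L)) := by
    constructor
    rw [MeasureTheory.Measure.restrict_apply_univ, Real.volume_Icc]
    exact ENNReal.ofReal_lt_top
  apply MeasureTheory.Measure.ext_of_Iic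
  intro a
  rw [MeasureTheory.Measure.map_apply hgm measurableSet_Iic,
    MeasureTheory.Measure.map_apply hΘm measurableSet_Iic]
  have hcg : g ⁻¹' (Set.Iic a) = (g ⁻¹' (Set.Ioi a))ᶜ := by
    ext s; simp [Set.mem_preimage, not_lt]
  have hcΘ : Θ ⁻¹' (Set.Iic a) = (Θ ⁻¹' (Set.Ioi a))ᶜ := by
    ext s; simp [Set.mem_preimage, not_lt]
  rw [hcg, hcΘ,
    MeasureTheory.measure_compl (hgm measurableSet_Ioi) (measure_ne_top _ _),
    MeasureTheory.measure_compl (hΘm measurableSet_Ioi) (measure_ne_top _ _)]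
  congr 1
  rw [MeasureTheory.Measure.restrict_apply (hgm measurableSet_Ioi),
    MeasureTheory.Measure.restrict_apply (hΘm measurableSet_Ioi)]
  exact key a

end NDAux

namespace NDAux

variable {L : ℝ} {θ : ℝ → ℝ} {K : NNReal}

/-- Transfer of integrals via the common pushforward. -/
lemma integral_comp_eq (hθ : LipschitzOnWith K θ (Set.Icc 0 L))
    (hrange : ∀ t ∈ Set.Icc 0 L, θ t ∈ Set.Icc (0:ℝ) Real.pi) (hL : 0 < L)
    (f : ℝ → ℝ) (hf : Continuous f) :
    (∫ t in (0:ℝ)..L, f (ndRearr L θ t)) = ∫ t in (0:ℝ)..L, f (θ t) := by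
  set g := fun s => ndRearr L θ (clamp L s) with hg
  set Θ := fun s => θ (clamp L s) with hΘ
  have hgm : Measurable g := (g_monotone hrange hL.le).measurable
  have hΘm : Measurable Θ := (Theta_continuous hθ hL.le).measurable
  have e1 : (∫ t in (0:ℝ)..L, f (ndRearr L θ t)) = ∫ t in Set.Icc (0:ℝ) L, f (g t) := by
    rw [intervalIntegral.integral_of_le hL.le, ← MeasureTheory.integral_Icc_eq_integral_Ioc]
    apply MeasureTheory.setIntegral_congr_fun measurableSet_Icc
    intro t ht
    simp only [hg, clamp_eq_self ht]
  have e2 : (∫ t in (0:ℝ)..L, f (θ t)) = ∫ t in Set.Icc (0:ℝ) L, f (Θ t) := by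
    rw [intervalIntegral.integral_of_le hL.le, ← MeasureTheory.integral_Icc_eq_integral_Ioc]
    apply MeasureTheory.setIntegral_congr_fun measurableSet_Icc
    intro t ht
    simp only [hΘ, clamp_eq_self ht]
  rw [e1, e2]
  have m1 : (∫ t in Set.Icc (0:ℝ) L, f (g t)) =
      ∫ y, f y ∂(MeasureTheory.Measure.map g (MeasureTheory.volume.restrict (Set.Icc 0 L))) :=
    (MeasureTheory.integral_map hgm.aemeasurable hf.aestronglyMeasurable).symm
  have m2 : (∫ t in Set.Icc (0:ℝ) L, f (Θ t)) =
      ∫ y, f y ∂(MeasureTheory.Measure.map Θ (MeasureTheory.volume.restrict (Set.Icc 0 L))) :=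
    (MeasureTheory.integral_map hΘm.aemeasurable hf.aestronglyMeasurable).symm
  rw [m1, m2, map_eq hθ hrange hL]

/-- sin on [π/4, 3π/4] is at least √2/2 -/
lemma sin_ge_aux {x : ℝ} (h1 : Real.pi/4 ≤ x) (h2 : x ≤ 3*Real.pi/4) :
    Real.sqrt 2 / 2 ≤ Real.sin x := by
  have hπ := Real.pi_pos
  rcases le_total x (Real.pi/2) with hx | hx
  · rw [← Real.sin_pi_div_four]
    apply Real.strictMonoOn_sin.monotoneOn ⟨by linarith, by linarith⟩ ⟨by linarith, hx⟩ h1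
  · rw [← Real.sin_pi_sub x, ← Real.sin_pi_div_four]
    apply Real.strictMonoOn_sin.monotoneOn ⟨by linarith, by linarith⟩ ⟨by linarith, by linarith⟩
      (by linarith)

/-- The integral of sin θ is positive. -/
lemma integral_sin_pos (hθ : LipschitzOnWith K θ (Set.Icc 0 L))
    (hrange : ∀ t ∈ Set.Icc 0 L, θ t ∈ Set.Icc (0:ℝ) Real.pi) (hL : 0 < L)
    (h0 : θ 0 = 0) (hLval : θ L = Real.pi) :
    0 < ∫ t in (0:ℝ)..L, Real.sin (θ t) := by
  have hπ := Real.pi_pos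
  have θcont : ContinuousOn θ (Set.Icc 0 L) := hθ.continuousOn
  -- IVT
  have hivt : Real.pi/2 ∈ θ '' Set.Icc 0 L := by
    apply intermediate_value_Icc hL.le θcont
    rw [h0, hLval]
    constructor <;> linarith
  obtain ⟨t₀, ht₀mem, ht₀⟩ := hivt
  set δ : ℝ := Real.pi/(4*((K:ℝ)+1)) with hδdef
  have hδpos : 0 < δ := by positivity
  set a : ℝ := max 0 (t₀ - δ) with hadef
  set b : ℝ := min L (t₀ + δ) with hbdef
  have ha0 : 0 ≤ a := le_max_left _ _
  have hab : a < b := by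
    apply max_lt_iff.mpr
    constructor
    · apply lt_min hL (by linarith [ht₀mem.1])
    · apply lt_min (by linarith [ht₀mem.2]) (by linarith)
  have hbL : b ≤ L := min_le_left _ _
  have haL : a ≤ L := by linarith
  -- sin θ ≥ √2/2 on [a, b]
  have hbound : ∀ t ∈ Set.Icc a b, Real.sqrt 2 / 2 ≤ Real.sin (θ t) := by
    intro t ht
    have htIcc : t ∈ Set.Icc 0 L := ⟨le_trans ha0 ht.1, le_trans ht.2 hbL⟩
    have hdist := hθ.dist_le_mul t htIcc t₀ ht₀mem
    rw [Real.dist_eq, Real.dist_eq, ht₀] at hdist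
    have habs : |t - t₀| ≤ δ := by
      rw [abs_le]
      constructor
      · have := ht.1
        have h1 : t₀ - δ ≤ a := le_max_right _ _
        linarith
      · have := ht.2
        have h2 : b ≤ t₀ + δ := min_le_right _ _
        linarith
    have hKd : (K:ℝ) * |t - t₀| ≤ (K:ℝ) * δ :=
      mul_le_mul_of_nonneg_left habs (NNReal.coe_nonneg K)
    have hKδ : (K:ℝ) * δ ≤ Real.pi/4 := by
      rw [hδdef, mul_div_assoc', div_le_iff₀ (by positivity)]
      nlinarith [NNReal.coe_nonneg K]
    have h3 := abs_le.mp (le_trans hdist (le_trans hKd hKδ))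
    apply sin_ge_aux (by linarith [h3.1]) (by linarith [h3.2])
  -- integrability
  have hsincont : ContinuousOn (fun t => Real.sin (θ t)) (Set.Icc 0 L) :=
    Real.continuous_sin.comp_continuousOn θcont
  have hint : ∀ u v : ℝ, 0 ≤ u → u ≤ v → v ≤ L →
      IntervalIntegrable (fun t => Real.sin (θ t)) MeasureTheory.volume u v := by
    intro u v hu huv hv
    apply ContinuousOn.intervalIntegrable
    apply hsincont.mono
    rw [Set.uIcc_of_le huv]
    exact Set.Icc_subset_Icc hu hv
  have hnonneg : ∀ t ∈ Set.Icc 0 L, 0 ≤ Real.sin (θ t) := fun t ht =>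
    Real.sin_nonneg_of_nonneg_of_le_pi (hrange t ht).1 (hrange t ht).2
  have i1 : 0 ≤ ∫ t in (0:ℝ)..a, Real.sin (θ t) := by
    apply intervalIntegral.integral_nonneg ha0
    intro t ht
    exact hnonneg t ⟨ht.1, le_trans ht.2 haL⟩
  have i3 : 0 ≤ ∫ t in b..L, Real.sin (θ t) := by
    apply intervalIntegral.integral_nonneg hbL
    intro t ht
    exact hnonneg t ⟨le_trans (le_trans ha0 hab.le) ht.1, ht.2⟩
  have i2 : (b - a) * (Real.sqrt 2 / 2) ≤ ∫ t in a..b, Real.sin (θ t) := by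
    have hconst : (∫ _ in a..b, (Real.sqrt 2 / 2 : ℝ)) = (b - a) * (Real.sqrt 2 / 2) := by
      simp only [intervalIntegral.integral_const, smul_eq_mul]
    rw [← hconst]
    apply intervalIntegral.integral_mono_on hab.le intervalIntegrable_const
      (hint a b ha0 hab.le hbL)
    exact hbound
  have i2pos : 0 < ∫ t in a..b, Real.sin (θ t) := by
    have : 0 < (b - a) * (Real.sqrt 2 / 2) := by
      apply mul_pos (by linarith)
      positivity
    linarith
  have hsplit : (∫ t in (0:ℝ)..L, Real.sin (θ t)) =
      (∫ t in (0:ℝ)..a, Real.sin (θ t)) + (∫ t in a..b, Real.sin (θ t))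
        + ∫ t in b..L, Real.sin (θ t) := by
    rw [intervalIntegral.integral_add_adjacent_intervals (hint 0 a le_rfl ha0 haL)
      (hint a b ha0 hab.le hbL)]
    rw [intervalIntegral.integral_add_adjacent_intervals (hint 0 b le_rfl (le_trans ha0 hab.le) hbL)
      (hint b L (le_trans ha0 hab.le) hbL le_rfl)]
  rw [hsplit]
  linarith

end NDAux

namespace NDAux

variable {L : ℝ} {θ : ℝ → ℝ} {K : NNReal}

lemma G_antitoneOn (hrange : ∀ t ∈ Set.Icc 0 L, θ t ∈ Set.Icc (0:ℝ) Real.pi) (hL : 0 < L) :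
    AntitoneOn (fun t => Real.cos (ndRearr L θ t)) (Set.Icc 0 L) := by
  intro s hs t ht hst
  exact Real.cos_le_cos_of_nonneg_of_le_pi (ndRearr_nonneg s) (ndRearr_le_pi hrange ht.1 ht.2)
    (ndRearr_monotoneOn hrange hs ht hst)

lemma G_intervalIntegrable (hrange : ∀ t ∈ Set.Icc 0 L, θ t ∈ Set.Icc (0:ℝ) Real.pi)
    (hL : 0 < L) {u v : ℝ} (hu : 0 ≤ u) (huv : u ≤ v) (hv : v ≤ L) :
    IntervalIntegrable (fun t => Real.cos (ndRearr L θ t)) MeasureTheory.volume u v := by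
  apply AntitoneOn.intervalIntegrable
  apply (G_antitoneOn hrange hL).mono
  rw [Set.uIcc_of_le huv]
  exact Set.Icc_subset_Icc hu hv

/-- Positivity of partial integrals of cos of the rearrangement. -/
lemma partial_pos (hθ : LipschitzOnWith K θ (Set.Icc 0 L))
    (hrange : ∀ t ∈ Set.Icc 0 L, θ t ∈ Set.Icc (0:ℝ) Real.pi) (hL : 0 < L)
    (hLval : θ L = Real.pi)
    (hcos0 : (∫ t in (0:ℝ)..L, Real.cos (ndRearr L θ t)) = 0)
    {s₀ : ℝ} (hs₀ : s₀ ∈ Set.Ioo (0:ℝ) L) :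
    0 < ∫ t in (0:ℝ)..s₀, Real.cos (ndRearr L θ t) := by
  have hπ := Real.pi_pos
  set G : ℝ → ℝ := fun t => Real.cos (ndRearr L θ t) with hGdef
  by_contra hns
  push_neg at hns
  obtain ⟨hs₀0, hs₀L⟩ := hs₀
  have hanti := G_antitoneOn (θ := θ) hrange hL
  have hint1 := G_intervalIntegrable (θ := θ) hrange hL le_rfl hs₀0.le hs₀L.le
  have hint2 := G_intervalIntegrable (θ := θ) hrange hL hs₀0.le hs₀L.le le_rfl
  have hs₀Icc : s₀ ∈ Set.Icc 0 L := ⟨hs₀0.le, hs₀L.le⟩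
  -- claim 1 : s₀ * G s₀ ≤ ∫₀^{s₀} G
  have claim1 : s₀ * G s₀ ≤ ∫ t in (0:ℝ)..s₀, G t := by
    have hconst : (∫ _ in (0:ℝ)..s₀, G s₀) = s₀ * G s₀ := by
      simp only [intervalIntegral.integral_const, smul_eq_mul, sub_zero]
    rw [← hconst]
    apply intervalIntegral.integral_mono_on hs₀0.le intervalIntegrable_const hint1
    intro t ht
    exact hanti ⟨ht.1, le_trans ht.2 hs₀L.le⟩ hs₀Icc ht.2
  have hGs₀ : G s₀ ≤ 0 := by nlinarith
  -- claim 2 : ∫_{s₀}^L G ≤ (L - s₀) * G s₀ ≤ 0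
  have claim2 : (∫ t in s₀..L, G t) ≤ (L - s₀) * G s₀ := by
    have hconst : (∫ _ in s₀..L, G s₀) = (L - s₀) * G s₀ := by
      simp only [intervalIntegral.integral_const, smul_eq_mul]
    rw [← hconst]
    apply intervalIntegral.integral_mono_on hs₀L.le hint2 intervalIntegrable_const
    intro t ht
    exact hanti hs₀Icc ⟨le_trans hs₀0.le ht.1, ht.2⟩ ht.1
  have hsum : (∫ t in (0:ℝ)..s₀, G t) + (∫ t in s₀..L, G t) = 0 := by
    rw [intervalIntegral.integral_add_adjacent_intervals hint1 hint2]
    exact hcos0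
  have hI1 : (∫ t in (0:ℝ)..s₀, G t) = 0 := by nlinarith
  have hI2 : (∫ t in s₀..L, G t) = 0 := by linarith
  -- G = 0 a.e. on Ioc s₀ L
  have hGnonpos : ∀ t ∈ Set.Ioc s₀ L, 0 ≤ -G t := by
    intro t ht
    have : G t ≤ G s₀ := hanti hs₀Icc ⟨le_trans hs₀0.le ht.1.le, ht.2⟩ ht.1.le
    linarith
  have hintOn : MeasureTheory.IntegrableOn (fun t => -G t) (Set.Ioc s₀ L) MeasureTheory.volume := by
    have := (intervalIntegrable_iff_integrableOn_Ioc_of_le hs₀L.le).mp hint2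
    exact this.neg
  have hzero : (∫ t in Set.Ioc s₀ L, -G t) = 0 := by
    have : (∫ t in Set.Ioc s₀ L, G t) = ∫ t in s₀..L, G t :=
      (intervalIntegral.integral_of_le hs₀L.le).symm
    rw [MeasureTheory.integral_neg, this, hI2, neg_zero]
  have hae : (fun t => -G t) =ᵐ[MeasureTheory.volume.restrict (Set.Ioc s₀ L)] 0 := by
    rw [← MeasureTheory.setIntegral_eq_zero_iff_of_nonneg_ae
      ((MeasureTheory.ae_restrict_iff' measurableSet_Ioc).mpr
        (MeasureTheory.ae_of_all _ (fun t ht => hGnonpos t ht))) hintOn]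
    exact hzero
  -- the null set where G ≠ 0 in Ioc s₀ L
  have hnull : MeasureTheory.volume {t ∈ Set.Ioc s₀ L | G t ≠ 0} = 0 := by
    have h1 := MeasureTheory.ae_iff.mp ((MeasureTheory.ae_restrict_iff'₀
      measurableSet_Ioc.nullMeasurableSet).mp hae)
    -- h1 : volume {a | ¬ (a ∈ Ioc s₀ L → -G a = 0)} = 0
    apply MeasureTheory.measure_mono_null _ h1
    intro t ht
    simp only [Set.mem_setOf_eq, Pi.zero_apply, neg_eq_zero] at ht ⊢
    exact fun h => ht.2 (h ht.1)
  -- volume of {θ* > π/2} is positive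
  have hEpos : 0 < MeasureTheory.volume {s : ℝ | s ∈ Set.Icc 0 L ∧ Real.pi/2 < ndRearr L θ s} := by
    rw [equimeasurable hrange hL (by positivity)]
    exact vol_gt_pos hθ hLval hL (by linarith)
  set V := MeasureTheory.volume {s : ℝ | s ∈ Set.Icc 0 L ∧ Real.pi/2 < ndRearr L θ s} with hV
  have hVfin : V ≠ ⊤ := by
    rw [hV, equimeasurable hrange hL (by positivity)]
    exact vol_levGT_ne_top _ hL.le
  set v := V.toReal with hv
  have hvpos : 0 < v := ENNReal.toReal_pos hEpos.ne' hVfin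
  -- find t₁ close to L with G t₁ = 0
  set m : ℝ := max s₀ (L - v/2) with hm
  have hmL : m < L := max_lt hs₀L (by linarith)
  have hms₀ : s₀ ≤ m := le_max_left _ _
  have hIm : 0 < MeasureTheory.volume (Set.Ioc m L) := by
    rw [Real.volume_Ioc]
    simpa using hmL
  have hsub : Set.Ioc m L ⊆ {t ∈ Set.Ioc s₀ L | G t ≠ 0} ∪ {t ∈ Set.Ioc m L | G t = 0} := by
    intro t ht
    rcases eq_or_ne (G t) 0 with h | h
    · exact Or.inr ⟨ht, h⟩
    · exact Or.inl ⟨⟨lt_of_le_of_lt hms₀ ht.1, ht.2⟩, h⟩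
  have hZne : {t ∈ Set.Ioc m L | G t = 0}.Nonempty := by
    by_contra hcon
    rw [Set.not_nonempty_iff_eq_empty] at hcon
    have := MeasureTheory.measure_mono (μ := MeasureTheory.volume) hsub
    rw [hcon, Set.union_empty] at this
    rw [hnull] at this
    exact absurd (le_antisymm this zero_le) hIm.ne'
  obtain ⟨t₁, ht₁mem, ht₁G⟩ := hZne
  have ht₁Icc : t₁ ∈ Set.Icc 0 L := ⟨le_trans hs₀0.le (le_trans hms₀ ht₁mem.1.le), ht₁mem.2⟩
  have ht₁val : ndRearr L θ t₁ = Real.pi/2 := by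
    apply Real.injOn_cos ⟨ndRearr_nonneg t₁, ndRearr_le_pi hrange ht₁Icc.1 ht₁Icc.2⟩
      ⟨by linarith, by linarith⟩
    rw [Real.cos_pi_div_two]
    exact ht₁G
  -- E ⊆ Ioc t₁ L
  have hEsub : {s : ℝ | s ∈ Set.Icc 0 L ∧ Real.pi/2 < ndRearr L θ s} ⊆ Set.Ioc t₁ L := by
    intro s hs
    refine ⟨?_, hs.1.2⟩
    by_contra hcon
    push_neg at hcon
    have := ndRearr_monotoneOn hrange hs.1 ht₁Icc hcon
    rw [ht₁val] at this
    linarith [hs.2]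
  have hVle : V ≤ ENNReal.ofReal (v/2) := by
    calc V ≤ MeasureTheory.volume (Set.Ioc t₁ L) := MeasureTheory.measure_mono hEsub
      _ = ENNReal.ofReal (L - t₁) := Real.volume_Ioc
      _ ≤ ENNReal.ofReal (v/2) := by
          apply ENNReal.ofReal_le_ofReal
          have h1 : L - v/2 ≤ m := le_max_right _ _
          have h2 : m < t₁ := ht₁mem.1
          linarith
  have : v ≤ v/2 := by
    have := ENNReal.toReal_mono ENNReal.ofReal_ne_top hVle
    rwa [ENNReal.toReal_ofReal (by linarith)] at this
  linarith

end NDAux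

theorem stmt_9 (L : ℝ) (hL : 0 < L) (θ : ℝ → ℝ) (K : NNReal)
    (hθ : LipschitzOnWith K θ (Set.Icc 0 L))
    (hrange : ∀ s ∈ Set.Icc 0 L, θ s ∈ Set.Icc (0:ℝ) Real.pi)
    (h0 : θ 0 = 0) (hLval : θ L = Real.pi)
    (hclosed : (∫ t in (0:ℝ)..L, Real.cos (θ t)) = 0)
    (hxpos : ∀ s ∈ Set.Ioo (0:ℝ) L, 0 < ∫ t in (0:ℝ)..s, Real.cos (θ t)) :
    ndRearr L θ 0 = 0 ∧ ndRearr L θ L = Real.pi ∧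
    (∫ t in (0:ℝ)..L, Real.cos (ndRearr L θ t)) = 0 ∧
    (0 < ∫ t in (0:ℝ)..L, Real.sin (ndRearr L θ t)) ∧
    ∀ s ∈ Set.Ioo (0:ℝ) L, 0 < ∫ t in (0:ℝ)..s, Real.cos (ndRearr L θ t) := by
  
  have hcos : (∫ t in (0:ℝ)..L, Real.cos (ndRearr L θ t)) = 0 := by
    rw [NDAux.integral_comp_eq hθ hrange hL Real.cos Real.continuous_cos]
    exact hclosed
  refine ⟨NDAux.ndRearr_zero hL, NDAux.ndRearr_L hθ hLval hrange hL, hcos, ?_, ?_⟩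
  · rw [NDAux.integral_comp_eq hθ hrange hL Real.sin Real.continuous_sin]
    exact NDAux.integral_sin_pos hθ hrange hL h0 hLval
  · intro s hs
    exact NDAux.partial_pos hθ hrange hL hLval hcos hs
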